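/- Assume the box-diagonal EPCAG setting, let α ∈ (0,σ) and assume 2K·L·(1+exp(σθ̄)) < σ−α, and assume additionally that the transition operator V satisfies the cocycle identity V(t,s) ∘ V(s,r) = V(t,r). Then every solution z = (u,v) of system (3*) on [t₀,∞) that is bounded on [t₀,∞) lies on the stable surface: it satisfies, for all t ≥ t₀, the integral system u(t) = U(t,t₀)u(t₀) + ∫_{t₀}^{t} U(t,s)·g₊(s, z(s), z(β(s))) ds and v(t) = −∫_{t}^{∞} V(t,s)·g₋(s, z(s), z(β(s))) ds; in particular v(t₀) = −∫_{t₀}^{∞} V(t₀,s)·g₋(s, z(s), z(β(s))) ds. Equivalently, any solution whose initial point does not satisfy this relation is unbounded on [t₀,∞). -/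

import Mathlib

open Set Real Filter MeasureTheory Topology

noncomputable section

abbrev Ek (k : ℕ) : Type := EuclideanSpace ℝ (Fin k)


/-- Two-sided uniqueness for the linear ODE `f' t = A t (f t)`. -/
lemma lin_ODE_unique {F : Type*} [NormedAddCommGroup F] [NormedSpace ℝ F]
    {A : ℝ → F →L[ℝ] F} (hA : Continuous A) {f g : ℝ → F}
    (hf : ∀ t, HasDerivAt f (A t (f t)) t)
    (hg : ∀ t, HasDerivAt g (A t (g t)) t)
    {t₀ : ℝ} (h0 : f t₀ = g t₀) (t : ℝ) : f t = g t := by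
  classical
  set a : ℝ := min t t₀ - 1 with ha_def
  set b : ℝ := max t t₀ + 1 with hb_def
  have hab : a < b := by
    have h1 : min t t₀ ≤ max t t₀ := le_trans (min_le_left _ _) (le_max_left _ _)
    simp only [ha_def, hb_def]; linarith
  have ht0 : t₀ ∈ Ioo a b := by
    constructor
    · have := min_le_right t t₀; simp only [ha_def]; linarith
    · have := le_max_right t t₀; simp only [hb_def]; linarith
  have htt : t ∈ Icc a b := by
    constructor
    · have := min_le_left t t₀; simp only [ha_def]; linarith
    · have := le_max_left t t₀; simp only [hb_def]; linarith
  obtain ⟨M, hM⟩ := (isCompact_Icc (a := a) (b := b)).exists_bound_of_continuousOn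
    hA.continuousOn
  have hM0 : 0 ≤ M := le_trans (norm_nonneg _) (hM a ⟨le_rfl, hab.le⟩)
  set v : ℝ → F → F := fun s y => A (max a (min s b)) y with hv_def
  have hv : ∀ s, LipschitzOnWith M.toNNReal (v s) univ := by
    intro s
    have hmem : max a (min s b) ∈ Icc a b :=
      ⟨le_max_left _ _, max_le hab.le (min_le_right _ _)⟩
    have hlip : LipschitzWith M.toNNReal (A (max a (min s b))) := by
      apply LipschitzWith.of_dist_le_mul
      intro x y
      rw [dist_eq_norm, dist_eq_norm, ← map_sub]
      calc ‖A (max a (min s b)) (x - y)‖ ≤ ‖A (max a (min s b))‖ * ‖x - y‖ :=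
            ContinuousLinearMap.le_opNorm _ _
        _ ≤ M * ‖x - y‖ := by
            apply mul_le_mul_of_nonneg_right (hM _ hmem) (norm_nonneg _)
        _ = (M.toNNReal : ℝ) * ‖x - y‖ := by rw [Real.coe_toNNReal M hM0]
    exact hlip.lipschitzOnWith
  have key := ODE_solution_unique_of_mem_Icc (v := v) (s := fun _ => univ) (fun s _ => hv s) ht0
    (fun s _ => (hf s).continuousAt.continuousWithinAt)
    (fun s hs => by
      have hcl : max a (min s b) = s := by
        rw [min_eq_left hs.2.le, max_eq_right hs.1.le]
      simpa [hv_def, hcl] using hf s)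
    (fun s _ => mem_univ _)
    (fun s _ => (hg s).continuousAt.continuousWithinAt)
    (fun s hs => by
      have hcl : max a (min s b) = s := by
        rw [min_eq_left hs.2.le, max_eq_right hs.1.le]
      simpa [hv_def, hcl] using hg s)
    (fun s _ => mem_univ _) h0
  exact key htt


lemma transition_cocycle {E : Type*} [NormedAddCommGroup E] [NormedSpace ℝ E]
    {B : ℝ → E →L[ℝ] E} (hB : Continuous B)
    {U : ℝ → ℝ → E →L[ℝ] E}
    (hUid : ∀ s, U s s = ContinuousLinearMap.id ℝ E)
    (hUderiv : ∀ s t, HasDerivAt (fun r => U r s) ((B t).comp (U t s)) t)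
    (t c s : ℝ) : (U t c).comp (U c s) = U t s := by
  have hA : Continuous fun r => (ContinuousLinearMap.compL ℝ E E E) (B r) :=
    (ContinuousLinearMap.compL ℝ E E E).continuous.comp hB
  refine lin_ODE_unique (A := fun r => (ContinuousLinearMap.compL ℝ E E E) (B r)) hA
    (f := fun r => (U r c).comp (U c s)) (g := fun r => U r s) ?_ ?_ (t₀ := c) ?_ t
  · intro r
    have h := (hUderiv c r).clm_comp (hasDerivAt_const r (U c s))
    simpa [ContinuousLinearMap.comp_assoc] using h
  · intro r; simpa using hUderiv s r
  · simp [hUid]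

lemma transition_cont2 {E : Type*} [NormedAddCommGroup E] [NormedSpace ℝ E] [CompleteSpace E]
    {B : ℝ → E →L[ℝ] E}
    {U : ℝ → ℝ → E →L[ℝ] E}
    (hUid : ∀ s, U s s = ContinuousLinearMap.id ℝ E)
    (hUderiv : ∀ s t, HasDerivAt (fun r => U r s) ((B t).comp (U t s)) t)
    (hUcoc : ∀ t c s, (U t c).comp (U c s) = U t s)
    (t : ℝ) : Continuous fun s => U t s := by
  have hcont : ∀ c : ℝ, Continuous fun s => U s c := fun c =>
    continuous_iff_continuousAt.2 fun s => (hUderiv c s).continuousAt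
  have key : ∀ s, Ring.inverse (U s t) = U t s := by
    intro s
    have h1 : (U s t) * (U t s) = 1 := by
      rw [ContinuousLinearMap.mul_def, hUcoc]
      exact hUid s
    have h2 : (U t s) * (U s t) = 1 := by
      rw [ContinuousLinearMap.mul_def, hUcoc]
      exact hUid t
    exact Ring.inverse_unit ⟨U s t, U t s, h1, h2⟩
  have hc : Continuous fun s => Ring.inverse (U s t) := by
    rw [continuous_iff_continuousAt]
    intro s
    have h1 : (U s t) * (U t s) = 1 := by
      rw [ContinuousLinearMap.mul_def, hUcoc]; exact hUid s
    have h2 : (U t s) * (U s t) = 1 := by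
      rw [ContinuousLinearMap.mul_def, hUcoc]; exact hUid t
    exact Filter.Tendsto.comp
      (NormedRing.inverse_continuousAt (⟨U s t, U t s, h1, h2⟩ : (E →L[ℝ] E)ˣ))
      ((hcont t).continuousAt)
  exact hc.congr key


section VOC
variable {n : ℕ} {B : ℝ → Ek n →L[ℝ] Ek n} {U : ℝ → ℝ → Ek n →L[ℝ] Ek n}

/-- Variation of constants formula. -/
lemma voc (hB : Continuous B)
    (hUid : ∀ s, U s s = ContinuousLinearMap.id ℝ (Ek n))
    (hUderiv : ∀ s t, HasDerivAt (fun r => U r s) ((B t).comp (U t s)) t)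
    (hUcoc : ∀ t c s, (U t c).comp (U c s) = U t s)
    (hUcont : ∀ t, Continuous fun s => U t s)
    (t₀ : ℝ) (y : ℝ → Ek n) (G : ℝ → Ek n)
    (hy : ContinuousOn y (Ici t₀))
    (hyd : ∀ u, t₀ ≤ u → HasDerivWithinAt y (B u (y u) + G u) (Ici u) u)
    (hGmeas : AEStronglyMeasurable G (volume.restrict (Ici t₀)))
    (hGcont : ∀ b, t₀ ≤ b → ContinuousWithinAt G (Ioi b) b)
    {DG : ℝ} (hGbdd : ∀ s, t₀ ≤ s → ‖G s‖ ≤ DG) :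
    ∀ t, t₀ ≤ t → IntervalIntegrable (fun s => U t s (G s)) volume t₀ t ∧
      y t = U t t₀ (y t₀) + ∫ s in t₀..t, U t s (G s) := by
  set q : ℝ → Ek n := fun s => U t₀ s (G s) with hq_def
  -- measurability of q on [t₀, ∞)
  have hqmeas : AEStronglyMeasurable q (volume.restrict (Ici t₀)) :=
    isBoundedBilinearMap_apply.continuous.comp_aestronglyMeasurable
      (((hUcont t₀).aestronglyMeasurable).prodMk hGmeas)
  -- integrability of q on [t₀, b]
  have hqInt : ∀ b, t₀ ≤ b → IntervalIntegrable q volume t₀ b := by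
    intro b hb
    rw [intervalIntegrable_iff_integrableOn_Icc_of_le hb]
    obtain ⟨Mq, hMq⟩ := (isCompact_Icc (a := t₀) (b := b)).exists_bound_of_continuousOn
      (hUcont t₀).continuousOn
    refine Integrable.mono' (integrable_const (Mq * DG))
      (hqmeas.mono_measure (Measure.restrict_mono Icc_subset_Ici_self le_rfl)) ?_
    rw [ae_restrict_iff' measurableSet_Icc]
    refine Eventually.of_forall fun s hs => ?_
    calc ‖q s‖ ≤ ‖U t₀ s‖ * ‖G s‖ := ContinuousLinearMap.le_opNorm _ _
      _ ≤ Mq * DG := by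
          apply mul_le_mul (hMq s hs) (hGbdd s hs.1) (norm_nonneg _)
          exact le_trans (norm_nonneg _) (hMq s hs)
  -- FTC
  have hFTC : ∀ b, t₀ ≤ b →
      HasDerivWithinAt (fun u => ∫ x in t₀..u, q x) (q b) (Ici b) b := by
    intro b hb
    refine intervalIntegral.integral_hasDerivWithinAt_right (hqInt b hb)
      ⟨Ioi b, self_mem_nhdsWithin,
        hqmeas.mono_measure (Measure.restrict_mono (Ioi_subset_Ici hb) le_rfl)⟩ ?_
    -- continuity of q within Ioi b at b
    exact (isBoundedBilinearMap_apply.continuous.continuousAt.comp_continuousWithinAt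
      (((hUcont t₀).continuousAt.continuousWithinAt).prodMk (hGcont b hb)))
  set h : ℝ → Ek n := fun u => ∫ x in t₀..u, q x with hh_def
  set P : ℝ → Ek n := fun u => U u t₀ (y t₀ + h u) with hP_def
  have hPd : ∀ u, t₀ ≤ u → HasDerivWithinAt P (B u (P u) + G u) (Ici u) u := by
    intro u hu
    have h1 : HasDerivWithinAt (fun r => U r t₀) ((B u).comp (U u t₀)) (Ici u) u :=
      (hUderiv t₀ u).hasDerivWithinAt
    have h2 : HasDerivWithinAt (fun r => y t₀ + h r) (q u) (Ici u) u :=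
      (hFTC u hu).const_add _
    have h3 := h1.clm_apply h2
    have he : ((B u).comp (U u t₀)) (y t₀ + h u) + (U u t₀) (q u) = B u (P u) + G u := by
      rw [ContinuousLinearMap.comp_apply, hq_def]
      have : (U u t₀) ((U t₀ u) (G u)) = G u := by
        rw [← ContinuousLinearMap.comp_apply, hUcoc, hUid]; rfl
      rw [this, hP_def]
    rwa [he] at h3
  have hhc : ContinuousOn h (Ici t₀) := by
    intro x hx
    have hxx : t₀ ≤ x := hx
    have hle : t₀ ≤ x + 1 := by linarith
    have hint : IntegrableOn q (uIcc t₀ (x + 1)) volume := by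
      rw [uIcc_of_le hle]
      exact (intervalIntegrable_iff_integrableOn_Icc_of_le hle).1 (hqInt _ hle)
    have hcc : ContinuousOn h (uIcc t₀ (x + 1)) :=
      intervalIntegral.continuousOn_primitive_interval hint
    rw [uIcc_of_le hle] at hcc
    refine (hcc x ⟨hxx, by linarith⟩).mono_of_mem_nhdsWithin ?_
    have hmem : Ici t₀ ∩ Iio (x + 1) ∈ nhdsWithin x (Ici t₀) :=
      Filter.inter_mem self_mem_nhdsWithin
        (mem_nhdsWithin_of_mem_nhds (Iio_mem_nhds (by linarith)))
    exact Filter.mem_of_superset hmem fun s hs => ⟨hs.1, le_of_lt hs.2⟩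
  have hPc : ContinuousOn P (Ici t₀) := by
    apply ContinuousOn.clm_apply
    · exact (continuous_iff_continuousAt.2 fun s => (hUderiv t₀ s).continuousAt).continuousOn
    · exact continuousOn_const.add hhc
  have hDzero : ∀ T, t₀ ≤ T → y T = P T := by
    intro T hT
    set D : ℝ → Ek n := fun u => y u - P u with hD_def
    obtain ⟨MB, hMB⟩ := (isCompact_Icc (a := t₀) (b := T)).exists_bound_of_continuousOn
      hB.continuousOn
    have hDc : ContinuousOn D (Icc t₀ T) :=
      (hy.mono Icc_subset_Ici_self).sub (hPc.mono Icc_subset_Ici_self)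
    have hDd : ∀ x ∈ Ico t₀ T, HasDerivWithinAt D (B x (D x)) (Ici x) x := by
      intro x hx
      have hsub := (hyd x hx.1).sub (hPd x hx.1)
      have he : (B x (y x) + G x) - (B x (P x) + G x) = B x (D x) := by
        rw [hD_def]; simp only [map_sub]; abel
      rwa [he] at hsub
    have hD0 : ‖D t₀‖ ≤ 0 := by
      have : D t₀ = 0 := by
        simp [hD_def, hP_def, hh_def, intervalIntegral.integral_same, hUid]
      simp [this]
    have hbound : ∀ x ∈ Ico t₀ T, ‖B x (D x)‖ ≤ MB * ‖D x‖ + 0 := by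
      intro x hx
      rw [add_zero]
      calc ‖B x (D x)‖ ≤ ‖B x‖ * ‖D x‖ := ContinuousLinearMap.le_opNorm _ _
        _ ≤ MB * ‖D x‖ :=
            mul_le_mul_of_nonneg_right (hMB x ⟨hx.1, hx.2.le⟩) (norm_nonneg _)
    have hgr := norm_le_gronwallBound_of_norm_deriv_right_le hDc hDd hD0 hbound T ⟨hT, le_rfl⟩
    rw [gronwallBound_ε0, zero_mul] at hgr
    have : D T = 0 := norm_le_zero_iff.1 hgr
    have := sub_eq_zero.1 this
    exact this
  intro t ht
  have hfun : (fun s => U t s (G s)) = fun s => (U t t₀) (q s) := by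
    funext s
    rw [hq_def, ← ContinuousLinearMap.comp_apply, hUcoc]
  have hint : IntervalIntegrable (fun s => U t s (G s)) volume t₀ t := by
    rw [hfun]
    exact ⟨(U t t₀).integrable_comp (hqInt t ht).1, (U t t₀).integrable_comp (hqInt t ht).2⟩
  refine ⟨hint, ?_⟩
  calc y t = U t t₀ (y t₀ + h t) := hDzero t ht
    _ = U t t₀ (y t₀) + U t t₀ (h t) := map_add _ _ _
    _ = U t t₀ (y t₀) + ∫ s in t₀..t, U t s (G s) := by
        rw [hfun, ContinuousLinearMap.intervalIntegral_comp_comm _ (hqInt t ht), hh_def]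
end VOC

lemma exists_idx (θ : ℤ → ℝ) (hmono : StrictMono θ) (htop : Tendsto θ atTop atTop)
    (hbot : Tendsto θ atBot atBot) (t : ℝ) : ∃ i : ℤ, θ i ≤ t ∧ t < θ (i + 1) := by
  classical
  obtain ⟨lo, hlo⟩ := (hbot.eventually (eventually_le_atBot t)).exists
  obtain ⟨hi, hhi⟩ := (htop.eventually (eventually_gt_atTop t)).exists
  obtain ⟨i, hi1, hi2⟩ := Int.exists_greatest_of_bdd (P := fun i : ℤ => θ i ≤ t)
    ⟨hi, fun w hw => by
      by_contra hc
      push_neg at hc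
      exact absurd (le_trans (hmono.monotone hc.le) hw) (not_le.2 hhi)⟩ ⟨lo, hlo⟩
  refine ⟨i, hi1, ?_⟩
  by_contra hc
  push_neg at hc
  exact absurd (hi2 _ hc) (by omega)

lemma zbeta_meas {X : Type*} [MeasurableSpace X] [TopologicalSpace X] [BorelSpace X]
    (θ : ℤ → ℝ) (hmono : StrictMono θ) (htop : Tendsto θ atTop atTop)
    (hbot : Tendsto θ atBot atBot)
    (β : ℝ → ℝ) (hβ : ∀ (i : ℤ) (t : ℝ), θ i ≤ t → t < θ (i + 1) → β t = θ i)
    (z : ℝ → X) : Measurable fun s => z (β s) := by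
  classical
  intro A hA
  have : (fun s => z (β s)) ⁻¹' A =
      ⋃ i : ℤ, if z (θ i) ∈ A then Ico (θ i) (θ (i + 1)) else (∅ : Set ℝ) := by
    ext s
    obtain ⟨i, h1, h2⟩ := exists_idx θ hmono htop hbot s
    have hβs : β s = θ i := hβ i s h1 h2
    simp only [mem_preimage, mem_iUnion]
    constructor
    · intro hs
      exact ⟨i, by rw [if_pos (by rwa [hβs] at hs)]; exact ⟨h1, h2⟩⟩
    · rintro ⟨j, hj⟩
      by_cases hcase : z (θ j) ∈ A
      · rw [if_pos hcase] at hj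
        have : β s = θ j := hβ j s hj.1 hj.2
        rwa [this]
      · rw [if_neg hcase] at hj
        exact absurd hj (notMem_empty s)
  rw [this]
  exact MeasurableSet.iUnion fun i => by
    split_ifs
    · exact measurableSet_Ico
    · exact MeasurableSet.empty

lemma g_joint_cont {E F : Type*} [NormedAddCommGroup E] [NormedAddCommGroup F]
    (g : ℝ → E → E → F) (hgc : ∀ x y, Continuous fun t => g t x y)
    (L : ℝ)
    (hlip : ∀ (t : ℝ) (x y x' y' : E),
      ‖g t x y - g t x' y'‖ ≤ L * (‖x - x'‖ + ‖y - y'‖)) :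
    Continuous fun p : ℝ × E × E => g p.1 p.2.1 p.2.2 := by
  rw [continuous_iff_continuousAt]
  rintro ⟨t, x, y⟩
  rw [ContinuousAt, tendsto_iff_norm_sub_tendsto_zero]
  have hb : Tendsto (fun p : ℝ × E × E =>
      L * (‖p.2.1 - x‖ + ‖p.2.2 - y‖) + ‖g p.1 x y - g t x y‖) (𝓝 (t, x, y)) (𝓝 0) := by
    have hcont : Continuous (fun p : ℝ × E × E =>
        L * (‖p.2.1 - x‖ + ‖p.2.2 - y‖) + ‖g p.1 x y - g t x y‖) := by
      apply Continuous.add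
      · exact continuous_const.mul
          (((continuous_fst.comp continuous_snd).sub continuous_const).norm.add
            (((continuous_snd.comp continuous_snd).sub continuous_const).norm))
      · exact (((hgc x y).comp continuous_fst).sub continuous_const).norm
    have := hcont.tendsto (t, x, y)
    simpa using this
  apply squeeze_zero (fun p => norm_nonneg _) (fun p => ?_) hb
  calc ‖g p.1 p.2.1 p.2.2 - g t x y‖
      ≤ ‖g p.1 p.2.1 p.2.2 - g p.1 x y‖ + ‖g p.1 x y - g t x y‖ :=
        norm_sub_le_norm_sub_add_norm_sub _ _ _
    _ ≤ L * (‖p.2.1 - x‖ + ‖p.2.2 - y‖) + ‖g p.1 x y - g t x y‖ :=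
        add_le_add_left (hlip _ _ _ _ _) _


def SolOn {k m : ℕ} (θ : ℤ → ℝ) (β : ℝ → ℝ)
    (Bp : ℝ → Ek k →L[ℝ] Ek k) (Bm : ℝ → Ek m →L[ℝ] Ek m)
    (gp : ℝ → Ek k × Ek m → Ek k × Ek m → Ek k)
    (gm : ℝ → Ek k × Ek m → Ek k × Ek m → Ek m)
    (z : ℝ → Ek k × Ek m) (J : Set ℝ) : Prop :=
  ContinuousOn z J ∧
  ∀ t ∈ J,
    (HasDerivWithinAt (fun s => (z s).1)
        (Bp t (z t).1 + gp t (z t) (z (β t))) (Ici t ∩ J) t ∧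
      HasDerivWithinAt (fun s => (z s).2)
        (Bm t (z t).2 + gm t (z t) (z (β t))) (Ici t ∩ J) t) ∧
    (t ∉ Set.range θ →
      HasDerivWithinAt (fun s => (z s).1)
        (Bp t (z t).1 + gp t (z t) (z (β t))) J t ∧
      HasDerivWithinAt (fun s => (z s).2)
        (Bm t (z t).2 + gm t (z t) (z (β t))) J t)

theorem stmt_8
    (k m : ℕ) (hk : 1 ≤ k) (hm : 1 ≤ m)
    (θ : ℤ → ℝ) (hθmono : StrictMono θ)
    (θb : ℝ) (hθb : 0 < θb) (hgap : ∀ i : ℤ, θ (i + 1) - θ i ≤ θb)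
    (hθtop : Tendsto θ atTop atTop) (hθbot : Tendsto θ atBot atBot)
    (β : ℝ → ℝ) (hβ : ∀ (i : ℤ) (t : ℝ), θ i ≤ t → t < θ (i + 1) → β t = θ i)
    (Bp : ℝ → Ek k →L[ℝ] Ek k) (Bm : ℝ → Ek m →L[ℝ] Ek m)
    (hBp : Continuous Bp) (hBm : Continuous Bm)
    (U : ℝ → ℝ → Ek k →L[ℝ] Ek k) (V : ℝ → ℝ → Ek m →L[ℝ] Ek m)
    (hUid : ∀ s : ℝ, U s s = ContinuousLinearMap.id ℝ (Ek k))
    (hVid : ∀ s : ℝ, V s s = ContinuousLinearMap.id ℝ (Ek m))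
    (hUderiv : ∀ s t : ℝ, HasDerivAt (fun r => U r s) ((Bp t).comp (U t s)) t)
    (hVderiv : ∀ s t : ℝ, HasDerivAt (fun r => V r s) ((Bm t).comp (V t s)) t)
    (K σ : ℝ) (hK : 1 ≤ K) (hσ : 0 < σ)
    (hU : ∀ s t : ℝ, s ≤ t → ‖U t s‖ ≤ K * Real.exp (-σ * (t - s)))
    (hV : ∀ s t : ℝ, t ≤ s → ‖V t s‖ ≤ K * Real.exp (-σ * (s - t)))
    (gp : ℝ → Ek k × Ek m → Ek k × Ek m → Ek k)
    (gm : ℝ → Ek k × Ek m → Ek k × Ek m → Ek m)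
    (hgpc : ∀ zz ww, Continuous fun t => gp t zz ww)
    (hgmc : ∀ zz ww, Continuous fun t => gm t zz ww)
    (L : ℝ) (hL : 0 < L)
    (hlip : ∀ (t : ℝ) (z₁ w₁ z₂ w₂ : Ek k × Ek m),
      ‖gp t z₁ w₁ - gp t z₂ w₂‖ + ‖gm t z₁ w₁ - gm t z₂ w₂‖ ≤
        L * (‖z₁ - z₂‖ + ‖w₁ - w₂‖))
    (hg0 : ∀ t : ℝ, gp t 0 0 = 0 ∧ gm t 0 0 = 0)
    (hVcoc : ∀ t s r : ℝ, (V t s).comp (V s r) = V t r)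
    (α : ℝ) (hα : 0 < α) (hασ : α < σ)
    (hsmall : 2 * K * L * (1 + Real.exp (σ * θb)) < σ - α)
    (t₀ : ℝ) (z : ℝ → Ek k × Ek m)
    (hz : SolOn θ β Bp Bm gp gm z (Ici t₀))
    (hb : ∃ C : ℝ, ∀ t : ℝ, t₀ ≤ t → ‖z t‖ ≤ C) :
    ∀ t : ℝ, t₀ ≤ t →
      ((z t).1 = U t t₀ (z t₀).1 + ∫ s in t₀..t, U t s (gp s (z s) (z (β s)))) ∧
      IntegrableOn (fun s => V t s (gm s (z s) (z (β s)))) (Ioi t) ∧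
      (z t).2 = -∫ s in Ioi t, V t s (gm s (z s) (z (β s))) := by
  classical
  haveI : SecondCountableTopology (Ek k × Ek m) := inferInstance
  haveI : BorelSpace (Ek k × Ek m) := inferInstance
  haveI : BorelSpace ((Ek k × Ek m) × (Ek k × Ek m)) := inferInstance
  haveI : BorelSpace (ℝ × (Ek k × Ek m) × (Ek k × Ek m)) := inferInstance
  obtain ⟨hzc, hzd⟩ := hz
  obtain ⟨C, hC⟩ := hb
  -- cocycles and continuity in the second variable
  have hUcoc : ∀ t c s : ℝ, (U t c).comp (U c s) = U t s :=
    transition_cocycle hBp hUid hUderiv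
  have hUcont : ∀ t : ℝ, Continuous fun s => U t s := transition_cont2 hUid hUderiv hUcoc
  have hVcont : ∀ t : ℝ, Continuous fun s => V t s := transition_cont2 hVid hVderiv hVcoc
  -- componentwise Lipschitz estimates
  have hlipp : ∀ (t : ℝ) (z₁ w₁ z₂ w₂ : Ek k × Ek m),
      ‖gp t z₁ w₁ - gp t z₂ w₂‖ ≤ L * (‖z₁ - z₂‖ + ‖w₁ - w₂‖) := fun t z₁ w₁ z₂ w₂ =>
    le_trans (le_add_of_nonneg_right (norm_nonneg _)) (hlip t z₁ w₁ z₂ w₂)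
  have hlipm : ∀ (t : ℝ) (z₁ w₁ z₂ w₂ : Ek k × Ek m),
      ‖gm t z₁ w₁ - gm t z₂ w₂‖ ≤ L * (‖z₁ - z₂‖ + ‖w₁ - w₂‖) := fun t z₁ w₁ z₂ w₂ =>
    le_trans (le_add_of_nonneg_left (norm_nonneg _)) (hlip t z₁ w₁ z₂ w₂)
  have hgpj : Continuous fun p : ℝ × (Ek k × Ek m) × (Ek k × Ek m) => gp p.1 p.2.1 p.2.2 :=
    g_joint_cont gp hgpc L hlipp
  have hgmj : Continuous fun p : ℝ × (Ek k × Ek m) × (Ek k × Ek m) => gm p.1 p.2.1 p.2.2 :=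
    g_joint_cont gm hgmc L hlipm
  set Gp : ℝ → Ek k := fun s => gp s (z s) (z (β s)) with hGp_def
  set Gm : ℝ → Ek m := fun s => gm s (z s) (z (β s)) with hGm_def
  -- uniform bound on z and z ∘ β on [t₀, ∞)
  obtain ⟨i₀, hi₀1, hi₀2⟩ := exists_idx θ hθmono hθtop hθbot t₀
  set M : ℝ := max C ‖z (θ i₀)‖ with hM_def
  have hzM : ∀ s, t₀ ≤ s → ‖z s‖ ≤ M := fun s hs => le_trans (hC s hs) (le_max_left _ _)
  have hzβM : ∀ s, t₀ ≤ s → ‖z (β s)‖ ≤ M := by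
    intro s hs
    obtain ⟨j, hj1, hj2⟩ := exists_idx θ hθmono hθtop hθbot s
    rw [hβ j s hj1 hj2]
    rcases le_or_gt t₀ (θ j) with h | h
    · exact le_trans (hC _ h) (le_max_left _ _)
    · have hji : j = i₀ := by
        have h1 : j ≤ i₀ := by
          by_contra hcon; push_neg at hcon
          have := hθmono.monotone (by omega : i₀ + 1 ≤ j)
          linarith
        have h2 : i₀ ≤ j := by
          by_contra hcon; push_neg at hcon
          have := hθmono.monotone (by omega : j + 1 ≤ i₀)
          linarith
        omega
      rw [hji]; exact le_max_right _ _
  set DG : ℝ := L * (2 * M) with hDG_def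
  have hGpb : ∀ s, t₀ ≤ s → ‖Gp s‖ ≤ DG := by
    intro s hs
    calc ‖Gp s‖ = ‖gp s (z s) (z (β s)) - gp s 0 0‖ := by rw [(hg0 s).1, sub_zero]
      _ ≤ L * (‖z s - 0‖ + ‖z (β s) - 0‖) := hlipp s _ _ _ _
      _ ≤ L * (2 * M) := by
          rw [sub_zero, sub_zero]
          apply mul_le_mul_of_nonneg_left _ hL.le
          linarith [hzM s hs, hzβM s hs]
  have hGmb : ∀ s, t₀ ≤ s → ‖Gm s‖ ≤ DG := by
    intro s hs
    calc ‖Gm s‖ = ‖gm s (z s) (z (β s)) - gm s 0 0‖ := by rw [(hg0 s).2, sub_zero]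
      _ ≤ L * (‖z s - 0‖ + ‖z (β s) - 0‖) := hlipm s _ _ _ _
      _ ≤ L * (2 * M) := by
          rw [sub_zero, sub_zero]
          apply mul_le_mul_of_nonneg_left _ hL.le
          linarith [hzM s hs, hzβM s hs]
  -- measurability
  have hzβmeas : Measurable fun s => z (β s) := zbeta_meas θ hθmono hθtop hθbot β hβ z
  have htrip : AEMeasurable (fun s => ((s, (z s, z (β s))) :
      ℝ × (Ek k × Ek m) × (Ek k × Ek m))) (volume.restrict (Ici t₀)) :=
    aemeasurable_id.prodMk ((hzc.aemeasurable measurableSet_Ici).prodMk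
      hzβmeas.aemeasurable)
  have hGpm : AEStronglyMeasurable Gp (volume.restrict (Ici t₀)) :=
    (hgpj.measurable.comp_aemeasurable htrip).aestronglyMeasurable
  have hGmm : AEStronglyMeasurable Gm (volume.restrict (Ici t₀)) :=
    (hgmj.measurable.comp_aemeasurable htrip).aestronglyMeasurable
  -- right-continuity within Ioi b
  have htripc : ∀ b, t₀ ≤ b → ContinuousWithinAt (fun s => ((s, (z s, z (β s))) :
      ℝ × (Ek k × Ek m) × (Ek k × Ek m))) (Ici b) b := by
    intro b hb
    obtain ⟨j, hj1, hj2⟩ := exists_idx θ hθmono hθtop hθbot b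
    have hβb : β b = θ j := hβ j b hj1 hj2
    have hev : ∀ᶠ s in nhdsWithin b (Ici b), z (β s) = z (θ j) := by
      have h2 : ∀ᶠ s in nhdsWithin b (Ici b), s < θ (j + 1) :=
        Filter.Eventually.filter_mono nhdsWithin_le_nhds (Iio_mem_nhds hj2)
      filter_upwards [self_mem_nhdsWithin, h2] with s hs1 hs2
      exact congrArg z (hβ j s (le_trans hj1 hs1) hs2)
    have hcwβ : ContinuousWithinAt (fun s => z (β s)) (Ici b) b := by
      refine ContinuousWithinAt.congr_of_eventuallyEq
        (continuousWithinAt_const (b := z (θ j))) hev ?_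
      rw [hβb]
    have hcwz : ContinuousWithinAt z (Ici b) b :=
      (hzc b hb).mono (Ici_subset_Ici.mpr hb)
    exact continuousWithinAt_id.prodMk (hcwz.prodMk hcwβ)
  have hGpcont : ∀ b, t₀ ≤ b → ContinuousWithinAt Gp (Ioi b) b := fun b hb =>
    ((hgpj.continuousAt.comp_continuousWithinAt (htripc b hb)).mono Ioi_subset_Ici_self)
  have hGmcont : ∀ b, t₀ ≤ b → ContinuousWithinAt Gm (Ioi b) b := fun b hb =>
    ((hgmj.continuousAt.comp_continuousWithinAt (htripc b hb)).mono Ioi_subset_Ici_self)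
  -- derivatives within Ici u
  have hud : ∀ u, t₀ ≤ u →
      HasDerivWithinAt (fun s => (z s).1) (Bp u (z u).1 + Gp u) (Ici u) u := by
    intro u hu
    have h := (hzd u hu).1.1
    rwa [inter_eq_left.mpr (Ici_subset_Ici.mpr hu)] at h
  have hvd : ∀ u, t₀ ≤ u →
      HasDerivWithinAt (fun s => (z s).2) (Bm u (z u).2 + Gm u) (Ici u) u := by
    intro u hu
    have h := (hzd u hu).1.2
    rwa [inter_eq_left.mpr (Ici_subset_Ici.mpr hu)] at h
  -- variation of constants for both components
  have hvoc1 := voc hBp hUid hUderiv hUcoc hUcont t₀ (fun s => (z s).1) Gp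
    (continuous_fst.comp_continuousOn hzc) hud hGpm hGpcont hGpb
  have hvoc2 := voc hBm hVid hVderiv hVcoc hVcont t₀ (fun s => (z s).2) Gm
    (continuous_snd.comp_continuousOn hzc) hvd hGmm hGmcont hGmb
  intro t ht
  have hmeasV : AEStronglyMeasurable (fun s => V t s (Gm s)) (volume.restrict (Ioi t)) :=
    isBoundedBilinearMap_apply.continuous.comp_aestronglyMeasurable
      (((hVcont t).aestronglyMeasurable).prodMk
        (hGmm.mono_measure (Measure.restrict_mono (Ioi_subset_Ici ht) le_rfl)))
  have hIoi : IntegrableOn (fun s => V t s (Gm s)) (Ioi t) := by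
    refine Integrable.mono'
      (g := fun s => (K * DG * Real.exp (σ * t)) * Real.exp (-σ * s))
      ((exp_neg_integrableOn_Ioi t hσ).const_mul _) hmeasV ?_
    rw [ae_restrict_iff' measurableSet_Ioi]
    refine Eventually.of_forall fun s hs => ?_
    have hts : t ≤ s := le_of_lt hs
    have hKexp : (0:ℝ) ≤ K * Real.exp (-σ * (s - t)) :=
      mul_nonneg (by linarith) (Real.exp_pos _).le
    calc ‖V t s (Gm s)‖ ≤ ‖V t s‖ * ‖Gm s‖ := ContinuousLinearMap.le_opNorm _ _
      _ ≤ (K * Real.exp (-σ * (s - t))) * DG :=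
          mul_le_mul (hV s t hts) (hGmb s (le_trans ht hts)) (norm_nonneg _) hKexp
      _ = (K * DG * Real.exp (σ * t)) * Real.exp (-σ * s) := by
          have harg : -σ * (s - t) = σ * t + -σ * s := by ring
          rw [harg, Real.exp_add]; ring
  refine ⟨(hvoc1 t ht).2, hIoi, ?_⟩
  -- key identity relating v(t) and v(T)
  have hkey : ∀ T, t ≤ T →
      V t T ((z T).2) - (z t).2 = ∫ s in t..T, V t s (Gm s) := by
    intro T hT
    have h1 : (z T).2 = V T t₀ ((z t₀).2) + ∫ s in t₀..T, V T s (Gm s) :=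
      (hvoc2 T (le_trans ht hT)).2
    have h2 : (z t).2 = V t t₀ ((z t₀).2) + ∫ s in t₀..t, V t s (Gm s) :=
      (hvoc2 t ht).2
    have hIT : IntervalIntegrable (fun s => V T s (Gm s)) volume t₀ T :=
      (hvoc2 T (le_trans ht hT)).1
    have hIt : IntervalIntegrable (fun s => V t s (Gm s)) volume t₀ t :=
      (hvoc2 t ht).1
    have hfunV : (fun s => (V t T) ((V T s) (Gm s))) = fun s => V t s (Gm s) := by
      funext s; rw [← ContinuousLinearMap.comp_apply, hVcoc]
    have hIT' : IntervalIntegrable (fun s => V t s (Gm s)) volume t₀ T := by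
      rw [← hfunV]
      exact ⟨(V t T).integrable_comp hIT.1, (V t T).integrable_comp hIT.2⟩
    have h3 : V t T ((z T).2) = V t t₀ ((z t₀).2) + ∫ s in t₀..T, V t s (Gm s) := by
      rw [h1, map_add, ← ContinuousLinearMap.comp_apply (V t T) (V T t₀), hVcoc,
        ← ContinuousLinearMap.intervalIntegral_comp_comm _ hIT, hfunV]
    rw [h3, h2, add_sub_add_left_eq_sub]
    exact intervalIntegral.integral_interval_sub_left hIT' hIt
  -- limits
  have limA : Tendsto (fun T => V t T ((z T).2)) atTop (nhds 0) := by
    have hev : ∀ᶠ T in atTop, ‖V t T ((z T).2)‖ ≤ (K * C) * Real.exp (-σ * (T - t)) := by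
      filter_upwards [eventually_ge_atTop t] with T hT
      have hKexp : (0:ℝ) ≤ K * Real.exp (-σ * (T - t)) :=
        mul_nonneg (by linarith) (Real.exp_pos _).le
      calc ‖V t T ((z T).2)‖ ≤ ‖V t T‖ * ‖(z T).2‖ := ContinuousLinearMap.le_opNorm _ _
        _ ≤ (K * Real.exp (-σ * (T - t))) * C :=
            mul_le_mul (hV T t hT)
              (le_trans (norm_snd_le _) (hC T (le_trans ht hT))) (norm_nonneg _) hKexp
        _ = (K * C) * Real.exp (-σ * (T - t)) := by ring
    refine squeeze_zero_norm' hev ?_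
    · have h1 : Tendsto (fun T : ℝ => T - t) atTop atTop :=
        tendsto_atTop_add_const_right atTop (-t) tendsto_id
      have h2 : Tendsto (fun T : ℝ => -σ * (T - t)) atTop atBot :=
        h1.const_mul_atTop_of_neg (by linarith)
      have h3 := Real.tendsto_exp_atBot.comp h2
      have h4 := h3.const_mul (K * C)
      simpa using h4
  have limB : Tendsto (fun T => ∫ s in t..T, V t s (Gm s)) atTop
      (nhds (∫ s in Ioi t, V t s (Gm s))) :=
    intervalIntegral_tendsto_integral_Ioi t hIoi tendsto_id
  have limAll : Tendsto (fun T => V t T ((z T).2) - ∫ s in t..T, V t s (Gm s)) atTop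
      (nhds (0 - ∫ s in Ioi t, V t s (Gm s))) := limA.sub limB
  have heq : (fun T => V t T ((z T).2) - ∫ s in t..T, V t s (Gm s)) =ᶠ[atTop]
      (fun _ => (z t).2) := by
    filter_upwards [eventually_ge_atTop t] with T hT
    have h := hkey T hT
    rw [← h]; abel
  have hzt := tendsto_nhds_unique (limAll.congr' heq) tendsto_const_nhds
  rw [zero_sub] at hzt
  exact hzt.symm
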